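/- Let μ be a positive Borel measure on ℝ and let f be a nonnegative μ-measurable function on ℝ such that μ({x : f(x) > t}) < ∞ for every t > 0. Then for every x ∈ ℝ, the symmetric decreasing rearrangement (with respect to μ) of the uncentered maximal function M_μ f satisfies (M_μ f)*(x) ≤ M(f*)(x), where M denotes the uncentered Hardy–Littlewood maximal operator with respect to Lebesgue measure and f* is the symmetric decreasing rearrangement of f with respect to μ. -/

import Mathlib

open MeasureTheory Set ENNReal

/-- Symmetric decreasing rearrangement (w.r.t. the measure `μ`) of an
`ℝ≥0∞`-valued function `g` on `ℝ`:  `g*(x) = inf {t > 0 | μ {g > t} ≤ 2|x|}`. -/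
noncomputable def rearrE (μ : Measure ℝ) (g : ℝ → ℝ≥0∞) (x : ℝ) : ℝ≥0∞ :=
  sInf {t : ℝ≥0∞ | 0 < t ∧ μ {y | t < g y} ≤ ENNReal.ofReal (2 * |x|)}

/-- Symmetric decreasing rearrangement (w.r.t. `μ`) of a real-valued function:
`f*(x) = inf {t > 0 | μ {|f| > t} ≤ 2|x|}`. -/
noncomputable def rearr (μ : Measure ℝ) (f : ℝ → ℝ) (x : ℝ) : ℝ≥0∞ :=
  rearrE μ (fun y => ENNReal.ofReal |f y|) x

/-- Uncentered Hardy-Littlewood maximal function w.r.t. `μ` of an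
`ℝ≥0∞`-valued function: the sup of averages over open intervals containing `x`
of positive `μ`-measure. -/
noncomputable def maximalE (μ : Measure ℝ) (g : ℝ → ℝ≥0∞) (x : ℝ) : ℝ≥0∞ :=
  ⨆ (a : ℝ) (b : ℝ) (_ : x ∈ Ioo a b) (_ : 0 < μ (Ioo a b)),
    (μ (Ioo a b))⁻¹ * ∫⁻ y in Ioo a b, g y ∂μ

/-- Uncentered Hardy-Littlewood maximal function `M_μ f` of a real-valued `f`. -/
noncomputable def maximal (μ : Measure ℝ) (f : ℝ → ℝ) (x : ℝ) : ℝ≥0∞ :=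
  maximalE μ (fun y => ENNReal.ofReal |f y|) x

/-- Weak `L^p` quasinorm w.r.t. `μ` of an `ℝ≥0∞`-valued function:
`sup_{t>0} t · μ({g > t})^(1/p)`. -/
noncomputable def wnormE (μ : Measure ℝ) (g : ℝ → ℝ≥0∞) (p : ℝ) : ℝ≥0∞ :=
  ⨆ (t : ℝ) (_ : 0 < t), ENNReal.ofReal t * μ {x | ENNReal.ofReal t < g x} ^ (1 / p)

/-- Weak `L^p` quasinorm `‖f‖_{L^{p,∞}(ℝ,dμ)} = sup_{t>0} t · μ({|f| > t})^(1/p)`. -/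
noncomputable def wnorm' (μ : Measure ℝ) (f : ℝ → ℝ) (p : ℝ) : ℝ≥0∞ :=
  wnormE μ (fun x => ENNReal.ofReal |f x|) p

/-- `f` is distributionally symmetric: for every `t > 0` the sets
`{x > 0 | f x > t}` and `{x < 0 | f x > t}` have the same Lebesgue measure. -/
def DistribSymm (f : ℝ → ℝ) : Prop :=
  ∀ t : ℝ, 0 < t → volume {x | 0 < x ∧ t < f x} = volume {x | x < 0 ∧ t < f x}

/-- Some interval of the family is covered by (at most two) others. -/
def IntCov (s : Finset (ℝ × ℝ)) : Prop :=
  ∃ p ∈ s, ∃ q ∈ s.erase p, ∃ r ∈ s.erase p,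
    Ioo p.1 p.2 ⊆ Ioo q.1 q.2 ∪ Ioo r.1 r.2

lemma intCov_mono {s s' : Finset (ℝ × ℝ)} (h : s ⊆ s') : IntCov s → IntCov s' := by
  rintro ⟨p, hp, q, hq, r, hr, hsub⟩
  exact ⟨p, h hp, q, Finset.erase_subset_erase p h hq,
    r, Finset.erase_subset_erase p h hr, hsub⟩

lemma alt_split (n : ℕ) : ∀ s : Finset (ℝ × ℝ), s.card ≤ n →
    (∀ p ∈ s, p.1 < p.2) → (∀ p ∈ s, ∀ q ∈ s, p.1 = q.1 → p = q) → ¬ IntCov s →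
    ∃ u v : Finset (ℝ × ℝ), u ∪ v = s ∧
      ((u : Set (ℝ × ℝ)).PairwiseDisjoint fun p => Ioo p.1 p.2) ∧
      ((v : Set (ℝ × ℝ)).PairwiseDisjoint fun p => Ioo p.1 p.2) ∧
      (∀ q ∈ v, ∃ m ∈ s, m.1 < q.1) := by
  induction n with
  | zero =>
    intro s hcard _ _ _
    refine ⟨∅, ∅, ?_, by simp, by simp, by simp⟩
    have : s = ∅ := Finset.card_eq_zero.mp (Nat.le_zero.mp hcard)
    simp [this]
  | succ n ih =>
    intro s hcard hne hinj hnc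
    rcases s.eq_empty_or_nonempty with hs | hs
    · exact ⟨∅, ∅, by simp [hs], by simp, by simp, by simp⟩
    obtain ⟨p₀, hp₀s, hp₀min⟩ := s.exists_min_image Prod.fst hs
    set s' := s.erase p₀ with hs'def
    have hsub' : s' ⊆ s := s.erase_subset p₀
    have hcard' : s'.card ≤ n := by
      have h2 : s'.card = s.card - 1 := by rw [hs'def]; exact Finset.card_erase_of_mem hp₀s
      have h3 : 1 ≤ s.card := Finset.card_pos.mpr hs
      omega
    -- strict minimality
    have hmin : ∀ q ∈ s', p₀.1 < q.1 := by
      intro q hq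
      have hqs : q ∈ s := hsub' hq
      have hle := hp₀min q hqs
      rcases lt_or_eq_of_le hle with h | h
      · exact h
      · exact absurd (hinj p₀ hp₀s q hqs h).symm (Finset.ne_of_mem_erase hq)
    obtain ⟨u, v, huv, hu, hv, hinv⟩ := ih s' hcard'
      (fun p hp => hne p (hsub' hp)) (fun p hp q hq => hinj p (hsub' hp) q (hsub' hq))
      (fun h => hnc (intCov_mono hsub' h))
    have hvs' : v ⊆ s' := by
      intro q hq; rw [← huv]; exact Finset.mem_union_right u hq
    have hus' : u ⊆ s' := by
      intro q hq; rw [← huv]; exact Finset.mem_union_left v hq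
    refine ⟨insert p₀ v, u, ?_, ?_, hu, ?_⟩
    · rw [Finset.insert_union, Finset.union_comm, huv]
      exact (Finset.insert_erase hp₀s)
    · -- pairwise disjointness of `insert p₀ v`
      rw [Finset.coe_insert]
      refine hv.insert fun q hq hne' => ?_
      have hqv : q ∈ v := hq
      have hqs' : q ∈ s' := hvs' hqv
      have hqs : q ∈ s := hsub' hqs'
      by_contra hnd
      obtain ⟨z, hz₀, hzq⟩ := Set.not_disjoint_iff.mp hnd
      obtain ⟨m, hms', hmq⟩ := hinv q hqv
      have hms : m ∈ s := hsub' hms'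
      have h1 : p₀.1 < m.1 := hmin m hms'
      have hq12 : q.1 < q.2 := hne q hqs
      have hm12 : m.1 < m.2 := hne m hms
      have hmq' : m ≠ q := fun h => absurd (congrArg Prod.fst h) (ne_of_lt hmq)
      have hm2q2 : m.2 < q.2 := by
        by_contra h
        push_neg at h
        apply hnc
        refine ⟨q, hqs, m, Finset.mem_erase.mpr ⟨hmq', hms⟩,
          m, Finset.mem_erase.mpr ⟨hmq', hms⟩, ?_⟩
        intro w hw
        exact Or.inl ⟨lt_trans hmq hw.1, lt_of_lt_of_le hw.2 h⟩
      have hq1p2 : q.1 < p₀.2 := lt_trans hzq.1 hz₀.2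
      apply hnc
      have hmp₀ : m ≠ p₀ := Finset.ne_of_mem_erase hms'
      refine ⟨m, hms, p₀, Finset.mem_erase.mpr ⟨hmp₀.symm, hp₀s⟩,
        q, Finset.mem_erase.mpr ⟨hmq'.symm, hqs⟩, ?_⟩
      · intro w hw
        rcases lt_or_ge w p₀.2 with h | h
        · exact Or.inl ⟨lt_trans h1 hw.1, h⟩
        · exact Or.inr ⟨lt_of_lt_of_le hq1p2 h, lt_trans hw.2 hm2q2⟩
    · intro q hqu
      exact ⟨p₀, hp₀s, hmin q (hus' hqu)⟩

lemma twofam (n : ℕ) : ∀ s : Finset (ℝ × ℝ), s.card ≤ n →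
    ∃ u v : Finset (ℝ × ℝ), u ⊆ s ∧ v ⊆ s ∧
      ((u : Set (ℝ × ℝ)).PairwiseDisjoint fun p => Ioo p.1 p.2) ∧
      ((v : Set (ℝ × ℝ)).PairwiseDisjoint fun p => Ioo p.1 p.2) ∧
      (⋃ p ∈ s, Ioo p.1 p.2) = (⋃ p ∈ u, Ioo p.1 p.2) ∪ (⋃ p ∈ v, Ioo p.1 p.2) := by
  induction n with
  | zero =>
    intro s hcard
    have : s = ∅ := Finset.card_eq_zero.mp (Nat.le_zero.mp hcard)
    exact ⟨∅, ∅, by simp [this], by simp, by simp, by simp, by simp [this]⟩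
  | succ n ih =>
    intro s hcard
    by_cases hc : IntCov s
    · obtain ⟨p, hp, q, hq, r, hr, hsub⟩ := hc
      have hcard' : (s.erase p).card ≤ n := by
        have := Finset.card_erase_of_mem hp
        have := Finset.card_pos.mpr ⟨p, hp⟩
        omega
      obtain ⟨u, v, hu, hv, hdu, hdv, hun⟩ := ih (s.erase p) hcard'
      refine ⟨u, v, hu.trans (s.erase_subset p), hv.trans (s.erase_subset p), hdu, hdv, ?_⟩
      rw [← hun]
      apply subset_antisymm
      · intro z hz
        simp only [Set.mem_iUnion] at hz ⊢
        obtain ⟨p', hp', hz'⟩ := hz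
        rcases eq_or_ne p' p with rfl | hne
        · rcases hsub hz' with h | h
          · exact ⟨q, hq, h⟩
          · exact ⟨r, hr, h⟩
        · exact ⟨p', Finset.mem_erase.mpr ⟨hne, hp'⟩, hz'⟩
      · exact Set.biUnion_subset_biUnion_left (Finset.erase_subset p s)
    · by_cases h1 : s.card ≤ 1
      · refine ⟨s, ∅, le_refl _, Finset.empty_subset s, ?_, by simp, by simp⟩
        have : (s : Set (ℝ × ℝ)).Subsingleton := fun a ha b hb =>
          Finset.card_le_one.mp h1 a ha b hb
        exact this.pairwise _
      · push_neg at h1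
        have hne : ∀ p ∈ s, p.1 < p.2 := by
          intro p hp
          by_contra h
          push_neg at h
          obtain ⟨q, hqs, hqp⟩ := Finset.exists_mem_ne h1 p
          exact hc ⟨p, hp, q, Finset.mem_erase.mpr ⟨hqp, hqs⟩,
            q, Finset.mem_erase.mpr ⟨hqp, hqs⟩, by simp [Set.Ioo_eq_empty (not_lt.mpr h)]⟩
        have hinj : ∀ p ∈ s, ∀ q ∈ s, p.1 = q.1 → p = q := by
          intro p hp q hq h
          by_contra hpq
          rcases lt_trichotomy p.2 q.2 with h2 | h2 | h2
          · exact hc ⟨p, hp, q, Finset.mem_erase.mpr ⟨(Ne.symm hpq), hq⟩,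
              q, Finset.mem_erase.mpr ⟨Ne.symm hpq, hq⟩,
              fun w hw => Or.inl ⟨h ▸ hw.1, lt_trans hw.2 h2⟩⟩
          · exact hpq (Prod.ext h h2)
          · exact hc ⟨q, hq, p, Finset.mem_erase.mpr ⟨hpq, hp⟩,
              p, Finset.mem_erase.mpr ⟨hpq, hp⟩,
              fun w hw => Or.inl ⟨h ▸ hw.1, lt_trans hw.2 h2⟩⟩
        obtain ⟨u, v, huv, hdu, hdv, _⟩ := alt_split (n+1) s hcard hne hinj hc
        refine ⟨u, v, ?_, ?_, hdu, hdv, ?_⟩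
        · rw [← huv]; exact Finset.subset_union_left
        · rw [← huv]; exact Finset.subset_union_right
        · rw [← huv, Finset.set_biUnion_union]

/-- threshold sets in `ℝ≥0∞` vs `ℝ`. -/
lemma set_eq_ofReal (f : ℝ → ℝ) (t : ℝ) (ht : 0 ≤ t) :
    {a : ℝ | ENNReal.ofReal t < ENNReal.ofReal |f a|} = {a : ℝ | t < |f a|} := by
  ext a
  simp [ENNReal.ofReal_lt_ofReal_iff_of_nonneg ht]

/-- monotone-convergence description of a strict sublevel set. -/
lemma meas_lt_eq_iSup (μ : Measure ℝ) (f : ℝ → ℝ) (hf : Measurable f) (t : ℝ) :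
    μ {a : ℝ | t < |f a|} = ⨆ n : ℕ, μ {a : ℝ | t + ((n : ℝ) + 1)⁻¹ < |f a|} := by
  have hU : {a : ℝ | t < |f a|} = ⋃ n : ℕ, {a : ℝ | t + ((n : ℝ) + 1)⁻¹ < |f a|} := by
    ext a
    simp only [mem_setOf_eq, mem_iUnion]
    constructor
    · intro h
      obtain ⟨n, hn⟩ := exists_nat_one_div_lt (sub_pos.mpr h)
      exact ⟨n, by rw [one_div] at hn; linarith⟩
    · rintro ⟨n, hn⟩
      have : (0:ℝ) < ((n:ℝ)+1)⁻¹ := by positivity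
      linarith
  rw [hU]
  exact Monotone.measure_iUnion (fun n m hnm a ha => by
    simp only [mem_setOf_eq] at ha ⊢
    have h1 : ((m:ℝ)+1)⁻¹ ≤ ((n:ℝ)+1)⁻¹ := by
      apply inv_anti₀ (by positivity)
      have := (Nat.cast_le (α := ℝ)).mpr hnm
      linarith
    linarith)

/-- The layer description of the rearrangement. -/
lemma rearr_layer (μ : Measure ℝ) (f : ℝ → ℝ) (hf : Measurable f) (t : ℝ) (ht : 0 < t) :
    {y : ℝ | ENNReal.ofReal t < rearr μ f y}
      = {y : ℝ | ENNReal.ofReal (2 * |y|) < μ {a | ENNReal.ofReal t < ENNReal.ofReal |f a|}} := by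
  ext y
  simp only [mem_setOf_eq, rearr, rearrE]
  constructor
  · intro h
    by_contra hc
    push_neg at hc
    have hmem : ENNReal.ofReal t ∈
        {s : ℝ≥0∞ | 0 < s ∧ μ {a | s < ENNReal.ofReal |f a|} ≤ ENNReal.ofReal (2 * |y|)} :=
      ⟨ENNReal.ofReal_pos.mpr ht, hc⟩
    exact absurd (sInf_le hmem) (not_le.mpr h)
  · intro h
    rw [set_eq_ofReal f t ht.le, meas_lt_eq_iSup μ f hf, lt_iSup_iff] at h
    obtain ⟨n, hn⟩ := h
    have key : ∀ s ∈ {s : ℝ≥0∞ | 0 < s ∧ μ {a | s < ENNReal.ofReal |f a|} ≤ ENNReal.ofReal (2 * |y|)},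
        ENNReal.ofReal (t + ((n : ℝ) + 1)⁻¹) ≤ s := by
      rintro s ⟨hs0, hsμ⟩
      by_contra hlt
      push_neg at hlt
      have hsub : {a : ℝ | t + ((n : ℝ) + 1)⁻¹ < |f a|} ⊆ {a : ℝ | s < ENNReal.ofReal |f a|} := by
        intro a ha
        have : ENNReal.ofReal (t + ((n : ℝ) + 1)⁻¹) < ENNReal.ofReal |f a| := by
          apply (ENNReal.ofReal_lt_ofReal_iff_of_nonneg (by positivity)).mpr ha
        exact lt_trans hlt this
      exact absurd (le_trans (measure_mono hsub) hsμ) (not_le.mpr hn)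
    have h1 : ENNReal.ofReal (t + ((n : ℝ) + 1)⁻¹) ≤ sInf _ := le_sInf key
    refine lt_of_lt_of_le ?_ h1
    apply (ENNReal.ofReal_lt_ofReal_iff_of_nonneg ht.le).mpr
    have : (0:ℝ) < ((n:ℝ)+1)⁻¹ := by positivity
    linarith

/-- The rearrangement is a measurable function. -/
lemma rearr_measurable (μ : Measure ℝ) (f : ℝ → ℝ) : Measurable (rearr μ f) := by
  have hF : Antitone (fun c : ℝ≥0∞ =>
      sInf {t : ℝ≥0∞ | 0 < t ∧ μ {y | t < ENNReal.ofReal |f y|} ≤ c}) := by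
    intro c c' hcc'
    apply sInf_le_sInf
    rintro s ⟨hs0, hsμ⟩
    exact ⟨hs0, hsμ.trans hcc'⟩
  have hm : Measurable fun y : ℝ => ENNReal.ofReal (2 * |y|) :=
    ENNReal.measurable_ofReal.comp (measurable_const.mul measurable_abs)
  exact hF.measurable.comp hm

/-- lower layer-cake bound for an `ℝ≥0∞`-valued function. -/
lemma layercake_ge (ν : Measure ℝ) (h : ℝ → ℝ≥0∞) (hm : Measurable h) :
    ∫⁻ t in Ioi (0:ℝ), ν {y | ENNReal.ofReal t < h y} ≤ ∫⁻ y, h y ∂ν := by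
  have cap : ∀ N : ℕ, ∫⁻ t in Ioo (0:ℝ) N, ν {y | ENNReal.ofReal t < h y} ≤ ∫⁻ y, h y ∂ν := by
    intro N
    set hN : ℝ → ℝ≥0∞ := fun y => min (h y) (N : ℝ≥0∞) with hNdef
    have hNne : ∀ y, hN y ≠ ⊤ := fun y =>
      ne_top_of_le_ne_top (ENNReal.natCast_ne_top N) (min_le_right _ _)
    have hNm : Measurable fun y => (hN y).toReal := (hm.min measurable_const).ennreal_toReal
    have h2 := lintegral_eq_lintegral_meas_lt ν (f := fun y => (hN y).toReal)
      (ae_of_all _ fun y => ENNReal.toReal_nonneg) hNm.aemeasurable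
    calc ∫⁻ t in Ioo (0:ℝ) N, ν {y | ENNReal.ofReal t < h y}
        = ∫⁻ t in Ioo (0:ℝ) N, ν {y | t < (hN y).toReal} := by
          apply setLIntegral_congr_fun measurableSet_Ioo
          intro t htI
          beta_reduce
          congr 1
          ext y
          simp only [mem_setOf_eq]
          rw [← ENNReal.ofReal_lt_iff_lt_toReal htI.1.le (hNne y), hNdef]
          simp only [lt_min_iff]
          constructor
          · intro hh
            refine ⟨hh, ?_⟩
            rw [← ENNReal.ofReal_natCast N]
            exact (ENNReal.ofReal_lt_ofReal_iff_of_nonneg htI.1.le).mpr htI.2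
          · exact fun hh => hh.1
      _ ≤ ∫⁻ t in Ioi (0:ℝ), ν {y | t < (hN y).toReal} := lintegral_mono_set Ioo_subset_Ioi_self
      _ = ∫⁻ y, ENNReal.ofReal ((hN y).toReal) ∂ν := h2.symm
      _ = ∫⁻ y, hN y ∂ν := by
          apply lintegral_congr
          intro y
          exact ENNReal.ofReal_toReal (hNne y)
      _ ≤ ∫⁻ y, h y ∂ν := lintegral_mono fun y => min_le_left _ _
  set F : ℝ → ℝ≥0∞ := fun t => ν {y | ENNReal.ofReal t < h y} with hFdef
  set κ : Measure ℝ := volume.withDensity F with hκdef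
  have hIoi : Ioi (0:ℝ) = ⋃ N : ℕ, Ioo (0:ℝ) N := by
    ext t
    simp only [mem_Ioi, mem_iUnion, mem_Ioo]
    exact ⟨fun ht => by obtain ⟨N, hN⟩ := exists_nat_gt t; exact ⟨N, ht, hN⟩, fun ⟨N, h1, _⟩ => h1⟩
  have hκIoi : ∫⁻ t in Ioi (0:ℝ), F t = ⨆ N : ℕ, ∫⁻ t in Ioo (0:ℝ) N, F t := by
    have e1 : ∀ s : Set ℝ, MeasurableSet s → κ s = ∫⁻ t in s, F t := fun s hs =>
      withDensity_apply F hs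
    rw [← e1 _ measurableSet_Ioi]
    have : κ (Ioi (0:ℝ)) = ⨆ N : ℕ, κ (Ioo (0:ℝ) N) := by
      rw [hIoi]
      exact Monotone.measure_iUnion fun n m hnm =>
        Ioo_subset_Ioo le_rfl (by exact_mod_cast Nat.cast_le.mpr hnm)
    rw [this]
    exact iSup_congr fun N => e1 _ measurableSet_Ioo
  rw [hκIoi]
  exact iSup_le cap

/-- distributional bound on integrals over a set. -/
lemma set_bound (μ : Measure ℝ) (f : ℝ → ℝ) (hf : Measurable f) (S : Set ℝ)
    (hS : MeasurableSet S) :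
    ∫⁻ y in S, ENNReal.ofReal |f y| ∂μ
      ≤ ∫⁻ t in Ioi (0:ℝ),
          min (μ S) (μ {a | ENNReal.ofReal t < ENNReal.ofReal |f a|}) := by
  rw [lintegral_eq_lintegral_meas_lt (μ.restrict S)
    (ae_of_all _ fun y => abs_nonneg (f y)) hf.abs.aemeasurable]
  apply setLIntegral_mono_ae' measurableSet_Ioi
  apply ae_of_all
  intro t ht
  rw [Measure.restrict_apply' hS]
  refine le_min (measure_mono inter_subset_right) ?_
  rw [set_eq_ofReal f t (le_of_lt ht)]
  exact measure_mono inter_subset_left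


lemma ofReal_double_div_two (z : ℝ) : ENNReal.ofReal (2 * z) / 2 = ENNReal.ofReal z := by
  rw [ENNReal.ofReal_mul (by norm_num : (0:ℝ) ≤ 2), ENNReal.ofReal_ofNat,
    mul_comm, mul_div_assoc, ENNReal.div_self two_ne_zero ENNReal.ofNat_ne_top, mul_one]

lemma real_min_double (c l : ℝ) : min (2 * c) (2 * l) = 2 * min c l := by
  rcases le_total c l with h | h
  · rw [min_eq_left h, min_eq_left (by linarith)]
  · rw [min_eq_right h, min_eq_right (by linarith)]

/-- volume of the intersection of a symmetric layer with an interval. -/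
lemma vol_layer (l r : ℝ) (hl : 0 < l) (hr : 0 < r) (m : ℝ≥0∞) :
    (min (ENNReal.ofReal (2 * l)) m + min (ENNReal.ofReal (2 * r)) m) / 2
      ≤ volume ({y : ℝ | ENNReal.ofReal (2 * |y|) < m} ∩ Ioo (-l) r) := by
  have hmono : Monotone ENNReal.ofReal := fun _ _ h => ENNReal.ofReal_le_ofReal h
  rcases eq_or_ne m ⊤ with rfl | hm
  · have h1 : {y : ℝ | ENNReal.ofReal (2 * |y|) < (⊤:ℝ≥0∞)} = univ := by
      ext y; simp [ENNReal.ofReal_lt_top]; exact ENNReal.mul_lt_top (by norm_num) ENNReal.ofReal_lt_top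
    rw [h1, univ_inter, Real.volume_Ioo]
    rw [min_eq_left le_top, min_eq_left le_top,
      ← ENNReal.ofReal_add (by positivity) (by positivity)]
    have : 2 * l + 2 * r = 2 * (r - -l) := by ring
    rw [this, ofReal_double_div_two]
  · set c : ℝ := m.toReal / 2 with hc
    have hc0 : 0 ≤ c := by positivity
    have h2c : 2 * c = m.toReal := by rw [hc]; ring
    have hm' : ENNReal.ofReal (2 * c) = m := by rw [h2c, ENNReal.ofReal_toReal hm]
    have h1 : {y : ℝ | ENNReal.ofReal (2 * |y|) < m} = Ioo (-c) c := by
      ext y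
      simp only [mem_setOf_eq, mem_Ioo]
      rw [ENNReal.ofReal_lt_iff_lt_toReal (by positivity) hm, ← h2c]
      constructor
      · intro h; constructor <;> [linarith [neg_abs_le y]; linarith [le_abs_self y]]
      · rintro ⟨ha, hb⟩; rcases abs_cases y with ⟨h, _⟩ | ⟨h, _⟩ <;> [linarith; linarith]
    rw [h1, Ioo_inter_Ioo, Real.volume_Ioo, ← hm',
      min_comm (ENNReal.ofReal (2*l)) _, min_comm (ENNReal.ofReal (2*r)) _,
      ← hmono.map_min, ← hmono.map_min,
      ← ENNReal.ofReal_add (by positivity) (by positivity),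
      real_min_double, real_min_double]
    have e3 : 2 * min c l + 2 * min c r = 2 * (min c l + min c r) := by ring
    rw [e3, ofReal_double_div_two]
    apply ENNReal.ofReal_le_ofReal
    have : max (-c) (-l) = -(min c l) := by
      rcases le_total c l with h | h
      · rw [min_eq_left h, max_eq_left (by linarith)]
      · rw [min_eq_right h, max_eq_right (by linarith)]
    rw [this]
    simp [min_comm]
    linarith [min_le_left c r, min_le_left c l]


/-- `(M_μ f)* (x) ≤ M(f*) (x)` for all `x`. -/
theorem stmt_0 (μ : Measure ℝ) (f : ℝ → ℝ) (hf : Measurable f)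
    (hf0 : ∀ x, 0 ≤ f x)
    (hfin : ∀ t : ℝ, 0 < t → μ {x | t < f x} < ⊤) :
    ∀ x : ℝ, rearrE μ (maximal μ f) x ≤ maximalE volume (rearr μ f) x := by
  intro x
  set S := maximalE volume (rearr μ f) x with hSdef
  have key : ∀ t : ℝ≥0∞, S < t → μ {y | t < maximal μ f y} ≤ ENNReal.ofReal (2 * |x|) := by
    intro t ht
    rcases eq_or_ne t ⊤ with rfl | htop
    · have hE : {y : ℝ | (⊤:ℝ≥0∞) < maximal μ f y} = ∅ := by
        ext y
        simp only [mem_setOf_eq, mem_empty_iff_false, iff_false]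
        exact not_top_lt
      rw [hE, measure_empty]
      exact zero_le
    obtain ⟨t', hSt', ht't⟩ := exists_between ht
    by_contra hcon
    push_neg at hcon
    set E := {y : ℝ | t < maximal μ f y} with hE
    -- Step 1 : witness intervals
    have hw : ∀ y : {z : ℝ // z ∈ E}, ∃ p : ℝ × ℝ, (y:ℝ) ∈ Ioo p.1 p.2 ∧ 0 < μ (Ioo p.1 p.2) ∧
        μ (Ioo p.1 p.2) ≠ ⊤ ∧
        t * μ (Ioo p.1 p.2) < ∫⁻ z in Ioo p.1 p.2, ENNReal.ofReal |f z| ∂μ := by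
      rintro ⟨y, hy⟩
      have hy' : t < ⨆ (a : ℝ) (b : ℝ) (_ : y ∈ Ioo a b) (_ : 0 < μ (Ioo a b)),
          (μ (Ioo a b))⁻¹ * ∫⁻ z in Ioo a b, ENNReal.ofReal |f z| ∂μ := hy
      rw [lt_iSup_iff] at hy'
      obtain ⟨a, hy'⟩ := hy'
      rw [lt_iSup_iff] at hy'
      obtain ⟨b, hy'⟩ := hy'
      rw [lt_iSup_iff] at hy'
      obtain ⟨hmem, hy'⟩ := hy'
      rw [lt_iSup_iff] at hy'
      obtain ⟨hpos, hlt⟩ := hy'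
      have hne : μ (Ioo a b) ≠ ⊤ := by
        intro hT
        rw [hT, ENNReal.inv_top, zero_mul] at hlt
        exact not_lt_zero' hlt
      refine ⟨(a, b), hmem, hpos, hne, ?_⟩
      have h0 : μ (Ioo a b) ≠ 0 := hpos.ne'
      have h1 := ENNReal.mul_lt_mul_left h0 hne hlt
      calc t * μ (Ioo a b)
          < ((μ (Ioo a b))⁻¹ * ∫⁻ z in Ioo a b, ENNReal.ofReal |f z| ∂μ) * μ (Ioo a b) := h1
        _ = ∫⁻ z in Ioo a b, ENNReal.ofReal |f z| ∂μ := by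
            rw [mul_comm, ← mul_assoc, ENNReal.mul_inv_cancel h0 hne, one_mul]
    choose P hP1 hP2 hP3 hP4 using hw
    -- Step 2 : Lindelöf + continuity from below
    have hEsub : E ⊆ ⋃ i : {z : ℝ // z ∈ E}, Ioo (P i).1 (P i).2 := fun z hz =>
      mem_iUnion.mpr ⟨⟨z, hz⟩, hP1 ⟨z, hz⟩⟩
    obtain ⟨T, hTc, hTeq⟩ := TopologicalSpace.isOpen_iUnion_countable
      (fun i : {z : ℝ // z ∈ E} => Ioo (P i).1 (P i).2) (fun i => isOpen_Ioo)
    have hEne : E.Nonempty := by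
      apply nonempty_of_measure_ne_zero (μ := μ)
      intro h0
      rw [h0] at hcon
      exact (not_le.mpr hcon) zero_le
    have hTne : T.Nonempty := by
      rcases T.eq_empty_or_nonempty with rfl | h
      · exfalso
        obtain ⟨z, hz⟩ := hEne
        have h1 := hEsub hz
        rw [← hTeq] at h1
        simpa using h1
      · exact h
    obtain ⟨q, hq⟩ := hTc.exists_eq_range hTne
    set J : ℕ → ℝ × ℝ := fun n => P (q n) with hJ
    have hEJ : E ⊆ ⋃ n : ℕ, Ioo (J n).1 (J n).2 := by
      intro z hz
      have h1 := hEsub hz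
      rw [← hTeq, hq] at h1
      simp only [mem_iUnion] at h1 ⊢
      obtain ⟨i, ⟨n, rfl⟩, h2⟩ := h1
      exact ⟨n, h2⟩
    have hiSup : ENNReal.ofReal (2 * |x|)
        < ⨆ n : ℕ, μ (Set.accumulate (fun k => Ioo (J k).1 (J k).2) n) := by
      rw [← measure_iUnion_eq_iSup_accumulate]
      exact lt_of_lt_of_le hcon (measure_mono hEJ)
    obtain ⟨N, hN⟩ := lt_iSup_iff.mp hiSup
    set s : Finset (ℝ × ℝ) := (Finset.range (N+1)).image J with hs
    have hsU : ⋃ p ∈ s, Ioo p.1 p.2 = Set.accumulate (fun k => Ioo (J k).1 (J k).2) N := by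
      rw [Set.accumulate_def]
      ext z
      simp only [mem_iUnion, Finset.mem_image, Finset.mem_range, hs, exists_prop]
      constructor
      · rintro ⟨p, ⟨k, hk, rfl⟩, hz⟩; exact ⟨k, by omega, hz⟩
      · rintro ⟨k, hk, hz⟩; exact ⟨J k, ⟨k, by omega, rfl⟩, hz⟩
    have hsP : ∀ p ∈ s, 0 < μ (Ioo p.1 p.2) ∧ μ (Ioo p.1 p.2) ≠ ⊤ ∧
        t * μ (Ioo p.1 p.2) < ∫⁻ z in Ioo p.1 p.2, ENNReal.ofReal |f z| ∂μ := by
      intro p hp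
      rw [hs, Finset.mem_image] at hp
      obtain ⟨k, _, rfl⟩ := hp
      exact ⟨hP2 _, hP3 _, hP4 _⟩
    -- Step 3 : two disjoint subfamilies
    obtain ⟨u, v, hus, hvs, hdu, hdv, huvU⟩ := twofam s.card s le_rfl
    set U1 := ⋃ p ∈ u, Ioo p.1 p.2 with hU1
    set U2 := ⋃ p ∈ v, Ioo p.1 p.2 with hU2
    have hU1m : MeasurableSet U1 := u.measurableSet_biUnion (fun p _ => measurableSet_Ioo)
    have hU2m : MeasurableSet U2 := v.measurableSet_biUnion (fun p _ => measurableSet_Ioo)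
    set ν := μ.withDensity (fun z => ENNReal.ofReal |f z|) with hν
    have hμU1 : μ U1 = ∑ p ∈ u, μ (Ioo p.1 p.2) :=
      measure_biUnion_finset hdu fun p _ => measurableSet_Ioo
    have hμU2 : μ U2 = ∑ p ∈ v, μ (Ioo p.1 p.2) :=
      measure_biUnion_finset hdv fun p _ => measurableSet_Ioo
    have hνU1 : ν U1 = ∑ p ∈ u, ν (Ioo p.1 p.2) :=
      measure_biUnion_finset hdu fun p _ => measurableSet_Ioo
    have hνU2 : ν U2 = ∑ p ∈ v, ν (Ioo p.1 p.2) :=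
      measure_biUnion_finset hdv fun p _ => measurableSet_Ioo
    have hνIoo : ∀ p : ℝ × ℝ, ν (Ioo p.1 p.2) = ∫⁻ z in Ioo p.1 p.2, ENNReal.ofReal |f z| ∂μ :=
      fun p => withDensity_apply _ measurableSet_Ioo
    have ht1 : t * μ U1 ≤ ν U1 := by
      rw [hμU1, hνU1, Finset.mul_sum]
      exact Finset.sum_le_sum fun p hp => by
        rw [hνIoo p]; exact ((hsP p (hus hp)).2.2).le
    have ht2 : t * μ U2 ≤ ν U2 := by
      rw [hμU2, hνU2, Finset.mul_sum]
      exact Finset.sum_le_sum fun p hp => by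
        rw [hνIoo p]; exact ((hsP p (hvs hp)).2.2).le
    have hU1fin : μ U1 ≠ ⊤ := by
      rw [hμU1]
      exact (ENNReal.sum_lt_top.mpr fun p hp => lt_top_iff_ne_top.mpr (hsP p (hus hp)).2.1).ne
    have hU2fin : μ U2 ≠ ⊤ := by
      rw [hμU2]
      exact (ENNReal.sum_lt_top.mpr fun p hp => lt_top_iff_ne_top.mpr (hsP p (hvs hp)).2.1).ne
    set W := U1 ∪ U2 with hW
    set V := U1 ∩ U2 with hV
    have hμW_lt : ENNReal.ofReal (2 * |x|) < μ W := by
      rw [← hsU, huvU] at hN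
      exact hN
    have hμWfin : μ W ≠ ⊤ := by
      refine ne_top_of_le_ne_top (ENNReal.add_ne_top.mpr ⟨hU1fin, hU2fin⟩) (measure_union_le _ _)
    have hμVfin : μ V ≠ ⊤ := ne_top_of_le_ne_top hU1fin (measure_mono inter_subset_left)
    have hincl_μ : μ W + μ V = μ U1 + μ U2 := measure_union_add_inter U1 hU2m
    have hincl_ν : ν W + ν V = ν U1 + ν U2 := measure_union_add_inter U1 hU2m
    have htW : t * (μ V + μ W) ≤ ν V + ν W := by
      have h1 : t * (μ U1 + μ U2) ≤ ν U1 + ν U2 := by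
        rw [mul_add]; exact add_le_add ht1 ht2
      rw [add_comm (μ V) (μ W), add_comm (ν V) (ν W), hincl_μ, hincl_ν]
      exact h1
    -- Step 4 : real parameters
    set C : ℝ := (μ V).toReal with hC
    set D : ℝ := (μ W).toReal with hD
    have hμV_eq : ENNReal.ofReal C = μ V := ENNReal.ofReal_toReal hμVfin
    have hμW_eq : ENNReal.ofReal D = μ W := ENNReal.ofReal_toReal hμWfin
    have hD2x : 2 * |x| < D :=
      (ENNReal.ofReal_lt_iff_lt_toReal (by positivity) hμWfin).mp hμW_lt
    have hD0 : 0 < D := lt_of_le_of_lt (by positivity) hD2x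
    have hC0 : 0 ≤ C := ENNReal.toReal_nonneg
    -- Step 5 : epsilon
    set QH : ℝ≥0∞ := (μ V + μ W) / 2 with hQH
    have hμW0 : μ W ≠ 0 := fun h0 => by simp [h0] at hμW_lt
    have hQH0 : QH ≠ 0 := by
      rw [hQH]
      simp only [ne_eq, ENNReal.div_eq_zero_iff, add_eq_zero, not_or, not_and]
      exact ⟨fun _ => hμW0, ENNReal.ofNat_ne_top⟩
    have hQHfin : QH ≠ ⊤ := by
      rw [hQH]
      exact (ENNReal.div_lt_top (ENNReal.add_ne_top.mpr ⟨hμVfin, hμWfin⟩) two_ne_zero).ne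
    have ht'0 : t' ≠ 0 := (lt_of_le_of_lt zero_le hSt').ne'
    have ht'fin : t' ≠ ⊤ := (ht't.trans (lt_top_iff_ne_top.mpr htop)).ne
    have hlt' : t' * QH < t * QH := ENNReal.mul_lt_mul_left hQH0 hQHfin ht't
    set δ : ℝ≥0∞ := t * QH - t' * QH with hδ
    have hδ0 : δ ≠ 0 := (tsub_pos_of_lt hlt').ne'
    have hδfin : δ ≠ ⊤ :=
      ne_top_of_le_ne_top (ENNReal.mul_ne_top htop hQHfin) (tsub_le_self.trans le_rfl)
    set R : ℝ≥0∞ := δ / t' with hR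
    have hR0 : R ≠ 0 := by
      rw [hR]
      simp only [ne_eq, ENNReal.div_eq_zero_iff, not_or]
      exact ⟨hδ0, ht'fin⟩
    have hRfin : R ≠ ⊤ := (ENNReal.div_lt_top hδfin ht'0).ne
    set ε : ℝ := min 1 R.toReal with hε
    have hε0 : 0 < ε := lt_min one_pos (ENNReal.toReal_pos hR0 hRfin)
    have hεR : ENNReal.ofReal ε ≤ R := by
      calc ENNReal.ofReal ε ≤ ENNReal.ofReal R.toReal :=
            ENNReal.ofReal_le_ofReal (min_le_right _ _)
        _ = R := ENNReal.ofReal_toReal hRfin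
    have hεδ : t' * ENNReal.ofReal ε ≤ δ := by
      calc t' * ENNReal.ofReal ε ≤ t' * R := mul_le_mul_right hεR _
        _ = δ := ENNReal.mul_div_cancel ht'0 ht'fin
    have hfinal : t' * (QH + ENNReal.ofReal ε) ≤ t * QH := by
      rw [mul_add]
      calc t' * QH + t' * ENNReal.ofReal ε ≤ t' * QH + δ := add_le_add le_rfl hεδ
        _ = t * QH := by rw [hδ, add_tsub_cancel_of_le hlt'.le]
    -- Step 6 : main interval estimate
    have main : ∀ l r : ℝ, 0 < l → 0 < r → x ∈ Ioo (-l) r → l + r = (C + D) / 2 + ε →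
        (∀ m : ℝ≥0∞, min (μ V) m + min (μ W) m
            ≤ min (ENNReal.ofReal (2*l)) m + min (ENNReal.ofReal (2*r)) m) → t' ≤ S := by
      intro l r hl hr hmem hsum hmin
      have hvolI : volume (Ioo (-l) r) = ENNReal.ofReal (l + r) := by
        rw [Real.volume_Ioo]; congr 1; ring
      have hvol_pos : 0 < volume (Ioo (-l) r) := by
        rw [hvolI]; exact ENNReal.ofReal_pos.mpr (by linarith)
      have hvol_eq : volume (Ioo (-l) r) = QH + ENNReal.ofReal ε := by
        rw [hvolI, hsum, ENNReal.ofReal_add (by positivity) hε0.le]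
        congr 1
        rw [hQH, ← hμV_eq, ← hμW_eq, ← ENNReal.ofReal_add hC0 hD0.le]
        rw [← ofReal_double_div_two ((C + D) / 2)]
        congr 1
        ring
      -- the λ function
      set lam : ℝ → ℝ≥0∞ := fun t'' => μ {a | ENNReal.ofReal t'' < ENNReal.ofReal |f a|}
        with hlam
      have hlam_anti : Antitone lam := by
        intro s1 s2 h12
        exact measure_mono fun a ha =>
          lt_of_le_of_lt (ENNReal.ofReal_le_ofReal h12) ha
      have hlam_meas : Measurable lam := hlam_anti.measurable
      -- integral lower bound
      have hI1 : ∫⁻ t'' in Ioi (0:ℝ),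
          volume ({y | ENNReal.ofReal t'' < rearr μ f y} ∩ Ioo (-l) r)
          ≤ ∫⁻ y in Ioo (-l) r, rearr μ f y ∂volume := by
        have h1 := layercake_ge (volume.restrict (Ioo (-l) r)) (rearr μ f)
          (rearr_measurable μ f)
        refine le_trans (le_of_eq ?_) h1
        apply setLIntegral_congr_fun measurableSet_Ioi
        intro t'' _
        beta_reduce
        rw [Measure.restrict_apply' measurableSet_Ioo]
      have hI2 : ∫⁻ t'' in Ioi (0:ℝ), (min (μ V) (lam t'') + min (μ W) (lam t'')) / 2
          ≤ ∫⁻ t'' in Ioi (0:ℝ),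
            volume ({y | ENNReal.ofReal t'' < rearr μ f y} ∩ Ioo (-l) r) := by
        apply setLIntegral_mono_ae' measurableSet_Ioi
        apply ae_of_all
        intro t'' ht''
        rw [rearr_layer μ f hf t'' ht'']
        refine le_trans ?_ (vol_layer l r hl hr (lam t''))
        exact ENNReal.div_le_div_right (hmin (lam t'')) 2
      have hsplit : ∫⁻ t'' in Ioi (0:ℝ), (min (μ V) (lam t'') + min (μ W) (lam t'')) / 2
          = ((∫⁻ t'' in Ioi (0:ℝ), min (μ V) (lam t''))
              + ∫⁻ t'' in Ioi (0:ℝ), min (μ W) (lam t'')) / 2 := by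
        simp only [div_eq_mul_inv]
        rw [← lintegral_add_left (measurable_const.min hlam_meas)]
        rw [← lintegral_mul_const' _ _ (by simp : (2:ℝ≥0∞)⁻¹ ≠ ⊤)]
      have hVb : ν V ≤ ∫⁻ t'' in Ioi (0:ℝ), min (μ V) (lam t'') := by
        rw [hν, withDensity_apply _ (hU1m.inter hU2m)]
        exact set_bound μ f hf V (hU1m.inter hU2m)
      have hWb : ν W ≤ ∫⁻ t'' in Ioi (0:ℝ), min (μ W) (lam t'') := by
        rw [hν, withDensity_apply _ (hU1m.union hU2m)]
        exact set_bound μ f hf W (hU1m.union hU2m)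
      have hchain : t * QH ≤ ∫⁻ y in Ioo (-l) r, rearr μ f y ∂volume := by
        calc t * QH = t * (μ V + μ W) / 2 := by rw [hQH, mul_div_assoc]
          _ ≤ (ν V + ν W) / 2 := ENNReal.div_le_div_right htW 2
          _ ≤ ((∫⁻ t'' in Ioi (0:ℝ), min (μ V) (lam t''))
              + ∫⁻ t'' in Ioi (0:ℝ), min (μ W) (lam t'')) / 2 :=
            ENNReal.div_le_div_right (add_le_add hVb hWb) 2
          _ = ∫⁻ t'' in Ioi (0:ℝ), (min (μ V) (lam t'') + min (μ W) (lam t'')) / 2 :=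
            hsplit.symm
          _ ≤ _ := le_trans hI2 hI1
      have hX0 : QH + ENNReal.ofReal ε ≠ 0 := by
        simp only [ne_eq, add_eq_zero, not_and]
        exact fun h => absurd h hQH0
      have hXfin : QH + ENNReal.ofReal ε ≠ ⊤ :=
        ENNReal.add_ne_top.mpr ⟨hQHfin, ENNReal.ofReal_ne_top⟩
      have hfin2 : t' ≤ (volume (Ioo (-l) r))⁻¹ * ∫⁻ y in Ioo (-l) r, rearr μ f y ∂volume := by
        rw [hvol_eq]
        calc t' = (QH + ENNReal.ofReal ε)⁻¹ * ((QH + ENNReal.ofReal ε) * t') := by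
              rw [← mul_assoc, ENNReal.inv_mul_cancel hX0 hXfin, one_mul]
          _ ≤ (QH + ENNReal.ofReal ε)⁻¹ * ∫⁻ y in Ioo (-l) r, rearr μ f y ∂volume := by
              apply mul_le_mul_right
              rw [mul_comm]
              exact le_trans hfinal hchain
      refine le_trans hfin2 ?_
      rw [hSdef]
      exact le_iSup_of_le (-l) (le_iSup_of_le r (le_iSup_of_le hmem
        (le_iSup_of_le hvol_pos le_rfl)))
    -- Step 7 : apply with the correct interval
    have hmin1 : ∀ m : ℝ≥0∞, min (μ V) m ≤ min (ENNReal.ofReal (2*(C/2 + ε))) m := by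
      intro m
      apply min_le_min _ le_rfl
      rw [← hμV_eq]
      apply ENNReal.ofReal_le_ofReal
      linarith
    have hmin2 : ∀ m : ℝ≥0∞, min (μ W) m = min (ENNReal.ofReal (2*(D/2))) m := by
      intro m
      congr 1
      rw [← hμW_eq]
      congr 1
      ring
    have habs : t' ≤ S := by
      rcases le_or_gt 0 x with hx | hx
      · refine main (C/2 + ε) (D/2) (by linarith) (by linarith)
          (Set.mem_Ioo.mpr ⟨by linarith, ?_⟩) (by ring) ?_
        · rw [abs_of_nonneg hx] at hD2x; linarith
        · intro m
          rw [hmin2 m]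
          exact add_le_add (hmin1 m) le_rfl
      · refine main (D/2) (C/2 + ε) (by linarith) (by linarith)
          (Set.mem_Ioo.mpr ⟨?_, by linarith⟩) (by ring) ?_
        · rw [abs_of_neg hx] at hD2x; linarith
        · intro m
          rw [add_comm (min (ENNReal.ofReal (2*(D/2))) m), ← hmin2 m,
            add_comm (min (μ V) m) (min (μ W) m), add_comm (min (ENNReal.ofReal (2*(C/2 + ε))) m)]
          exact add_le_add le_rfl (hmin1 m)
    exact absurd habs (not_le.mpr hSt')
  -- conclusion from `key`
  rcases eq_or_ne S ⊤ with hS | hS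
  · rw [hS]; exact le_top
  have h1 : Ioi S ⊆ {t : ℝ≥0∞ | 0 < t ∧ μ {y | t < maximal μ f y} ≤ ENNReal.ofReal (2 * |x|)} :=
    fun t ht => ⟨lt_of_le_of_lt zero_le ht, key t ht⟩
  have h2 : rearrE μ (maximal μ f) x ≤ sInf (Ioi S) := sInf_le_sInf h1
  refine h2.trans ?_
  by_contra h3
  push_neg at h3
  obtain ⟨c, hc1, hc2⟩ := exists_between h3
  exact absurd (sInf_le (mem_Ioi.mpr hc1)) (not_le.mpr hc2)
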